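/- Let F₀, F₁ : U → ℝ^k be feature maps on the grid U = ZMod Q × ZMod M such that F̂₁(ω)*F̂₀(ω) ≠ 0 for every ω ∈ U, and let G : U → ℝ^k be the (real-valued) channelwise inverse discrete Fourier transform of Ĝ(ω) = F̂₁(ω) · (F̂₁(ω)*F̂₀(ω)) / |F̂₁(ω)*F̂₀(ω)|. Then G has the same second-order statistics as F₁: the Gram matrices agree, (1/|U|) Σ_{p∈U} G(p,i)·G(p,j) = (1/|U|) Σ_{p∈U} F₁(p,i)·F₁(p,j) for all channels i, j, and the correlations agree, (1/|U|) Σ_{p'∈U} G(p',n)·G(p+p',n) = (1/|U|) Σ_{p'∈U} F₁(p',n)·F₁(p+p',n) for every offset p ∈ U and channel n. (This is the ρ = 1 boundary condition of Proposition 2.) -/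

import Mathlib

open Finset Complex

/-- The discrete Fourier transform of `g : ZMod Q × ZMod M → ℂ`. -/
noncomputable def dft (Q M : ℕ) [NeZero Q] [NeZero M]
    (g : ZMod Q × ZMod M → ℂ) (ω : ZMod Q × ZMod M) : ℂ :=
  ∑ p : ZMod Q × ZMod M, g p *
    Complex.exp (-(2 * Real.pi * Complex.I) *
      (((ω.1.val * p.1.val : ℕ) : ℂ) / (Q : ℂ) + ((ω.2.val * p.2.val : ℕ) : ℂ) / (M : ℂ)))

/-- The channelwise DFT of a real feature map `F : U → ℝ^k`. -/
noncomputable def cdft (Q M : ℕ) [NeZero Q] [NeZero M] {k : ℕ}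
    (F : ZMod Q × ZMod M → Fin k → ℝ) (ω : ZMod Q × ZMod M) (n : Fin k) : ℂ :=
  dft Q M (fun p => ((F p n : ℝ) : ℂ)) ω

/-- The inverse discrete Fourier transform of `h : ZMod Q × ZMod M → ℂ`. -/
noncomputable def idft (Q M : ℕ) [NeZero Q] [NeZero M]
    (h : ZMod Q × ZMod M → ℂ) (p : ZMod Q × ZMod M) : ℂ :=
  (∑ ω : ZMod Q × ZMod M, h ω *
    Complex.exp ((2 * Real.pi * Complex.I) *
      (((ω.1.val * p.1.val : ℕ) : ℂ) / (Q : ℂ) + ((ω.2.val * p.2.val : ℕ) : ℂ) / (M : ℂ)))) /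
    ((Q * M : ℕ) : ℂ)

/-- Hermitian inner product `a*b = Σ_n conj(a_n)·b_n` on `ℂ^k`. -/
noncomputable def cinner {k : ℕ} (a b : Fin k → ℂ) : ℂ :=
  ∑ n : Fin k, (starRingEnd ℂ) (a n) * b n

/-- The optimal-transport mixed spectrum
`Ĝ(ω) = F̂₁(ω)·(F̂₁(ω)*F̂₀(ω))/|F̂₁(ω)*F̂₀(ω)|`. -/
noncomputable def Ghat (Q M : ℕ) [NeZero Q] [NeZero M] {k : ℕ}
    (F₀ F₁ : ZMod Q × ZMod M → Fin k → ℝ) (ω : ZMod Q × ZMod M) (n : Fin k) : ℂ :=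
  cdft Q M F₁ ω n * cinner (cdft Q M F₁ ω) (cdft Q M F₀ ω) /
    ((‖cinner (cdft Q M F₁ ω) (cdft Q M F₀ ω)‖ : ℝ) : ℂ)




noncomputable def chi (N : ℕ) (a : ZMod N) : ℂ :=
  Complex.exp (2 * Real.pi * Complex.I * a.val / N)

variable {N : ℕ} [NeZero N]

lemma natCast_val_self (a : ZMod N) : ((a.val : ℕ) : ZMod N) = a := by
  rw [ZMod.natCast_val, ZMod.cast_id]

lemma chi_nat (m : ℕ) : chi N (m : ZMod N) =
    Complex.exp (2 * Real.pi * Complex.I * m / N) := by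
  have hN : (N : ℂ) ≠ 0 := Nat.cast_ne_zero.2 (NeZero.ne N)
  rw [chi, ZMod.val_natCast]
  have hm : (m : ℂ) = (m % N : ℕ) + (m / N : ℕ) * N := by
    push_cast
    exact_mod_cast (congrArg (Nat.cast : ℕ → ℂ) (Nat.mod_add_div' m N)).symm
  rw [hm]
  have h2 : 2 * Real.pi * Complex.I * ((m % N : ℕ) + (m / N : ℕ) * (N:ℂ)) / N
      = 2 * Real.pi * Complex.I * (m % N : ℕ) / N + (m / N : ℕ) * (2 * Real.pi * Complex.I) := by
    field_simp
  rw [h2, Complex.exp_add]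
  have h1 : Complex.exp (((m / N : ℕ) : ℂ) * (2 * Real.pi * Complex.I)) = 1 := by
    simpa using Complex.exp_int_mul_two_pi_mul_I (m / N : ℕ)
  rw [h1, mul_one]

omit [NeZero N] in
lemma chi_zero : chi N 0 = 1 := by simp [chi]

lemma chi_add (a b : ZMod N) : chi N (a + b) = chi N a * chi N b := by
  have h : a + b = ((a.val + b.val : ℕ) : ZMod N) := by
    push_cast [natCast_val_self]
    rfl
  rw [h, chi_nat]
  simp only [chi]
  rw [← Complex.exp_add]
  congr 1
  push_cast
  ring

omit [NeZero N] in
lemma chi_ne_zero (a : ZMod N) : chi N a ≠ 0 := Complex.exp_ne_zero _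

lemma chi_neg (a : ZMod N) : chi N (-a) = (chi N a)⁻¹ := by
  have h := chi_add (N := N) a (-a)
  rw [add_neg_cancel, chi_zero] at h
  field_simp [chi_ne_zero]
  linear_combination -h

lemma chi_mul_val (a b : ZMod N) :
    chi N (a * b) = Complex.exp (2 * Real.pi * Complex.I * ((a.val * b.val : ℕ) : ℂ) / N) := by
  have h : a * b = ((a.val * b.val : ℕ) : ZMod N) := by
    push_cast [natCast_val_self]
    rfl
  rw [h, chi_nat]

omit [NeZero N] in
lemma chi_conj (a : ZMod N) : (starRingEnd ℂ) (chi N a) = (chi N a)⁻¹ := by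
  rw [chi, ← Complex.exp_conj, ← Complex.exp_neg]
  congr 1
  simp [map_mul, map_div₀, Complex.conj_I, map_ofNat]
  ring

lemma chi_sum (a : ZMod N) : ∑ x : ZMod N, chi N (a * x) = if a = 0 then (N : ℂ) else 0 := by
  split_ifs with ha
  · subst ha
    simp [chi_zero]
  · have hN : (N : ℂ) ≠ 0 := Nat.cast_ne_zero.2 (NeZero.ne N)
    set ζ : ℂ := Complex.exp (2 * Real.pi * Complex.I * a.val / N) with hζ
    have hterm : ∀ x : ZMod N, chi N (a * x) = ζ ^ x.val := by
      intro x
      rw [chi_mul_val, ← Complex.exp_nat_mul]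
      congr 1
      push_cast
      ring
    have hsum : ∑ x : ZMod N, chi N (a * x) = ∑ i ∈ Finset.range N, ζ ^ i := by
      refine Finset.sum_nbij' (fun x => x.val) (fun i => (i : ZMod N)) ?_ ?_ ?_ ?_ ?_
      · exact fun x _ => Finset.mem_range.2 (ZMod.val_lt x)
      · exact fun i _ => Finset.mem_univ _
      · exact fun x _ => natCast_val_self x
      · intro i hi
        show ((i : ZMod N)).val = i
        rw [ZMod.val_natCast, Nat.mod_eq_of_lt (Finset.mem_range.1 hi)]
      · exact fun x _ => hterm x
    have hζN : ζ ^ N = 1 := by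
      rw [hζ, ← Complex.exp_nat_mul]
      have h3 : (N : ℂ) * (2 * Real.pi * Complex.I * a.val / N) = ((a.val : ℤ) : ℂ) * (2 * Real.pi * Complex.I) := by
        push_cast; field_simp
      rw [h3, Complex.exp_int_mul_two_pi_mul_I]
    have hζ1 : ζ ≠ 1 := by
      intro hone
      rw [hζ, Complex.exp_eq_one_iff] at hone
      obtain ⟨n, hn⟩ := hone
      have hne : (2 * Real.pi * Complex.I) ≠ 0 := by
        simp [Real.pi_ne_zero, Complex.I_ne_zero]
      rw [div_eq_iff hN] at hn
      have h2 : (a.val : ℂ) * (2 * Real.pi * Complex.I) = ((n * N : ℤ) : ℂ) * (2 * Real.pi * Complex.I) := by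
        push_cast
        linear_combination hn
      have hv : (a.val : ℂ) = ((n * N : ℤ) : ℂ) := mul_right_cancel₀ hne h2
      have hvz : ((a.val : ℤ)) = n * N := by exact_mod_cast hv
      have hdvd : N ∣ a.val := by
        have : (N : ℤ) ∣ (a.val : ℤ) := ⟨n, by linarith⟩
        exact_mod_cast this
      have hv0 : a.val = 0 := Nat.eq_zero_of_dvd_of_lt hdvd (ZMod.val_lt a)
      exact ha (by rwa [← ZMod.val_eq_zero])
    rw [hsum, geom_sum_eq hζ1, hζN]
    simp

section Psi
variable (Q M : ℕ) [NeZero Q] [NeZero M]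

noncomputable def psi (ω p : ZMod Q × ZMod M) : ℂ :=
  chi Q (ω.1 * p.1) * chi M (ω.2 * p.2)

variable {Q M}

lemma psi_ne_zero (ω p : ZMod Q × ZMod M) : psi Q M ω p ≠ 0 :=
  mul_ne_zero (chi_ne_zero _) (chi_ne_zero _)

lemma psi_comm (ω p : ZMod Q × ZMod M) : psi Q M ω p = psi Q M p ω := by
  simp [psi, mul_comm]

lemma psi_add_left (ω ω' p : ZMod Q × ZMod M) :
    psi Q M (ω + ω') p = psi Q M ω p * psi Q M ω' p := by
  simp only [psi, Prod.fst_add, Prod.snd_add, add_mul, chi_add]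
  ring

lemma psi_neg_left (ω p : ZMod Q × ZMod M) : psi Q M (-ω) p = (psi Q M ω p)⁻¹ := by
  simp only [psi, Prod.fst_neg, Prod.snd_neg, neg_mul, chi_neg, mul_inv]

lemma psi_conj (ω p : ZMod Q × ZMod M) :
    (starRingEnd ℂ) (psi Q M ω p) = (psi Q M ω p)⁻¹ := by
  simp only [psi, map_mul, chi_conj, mul_inv]

lemma psi_zero_right (ω : ZMod Q × ZMod M) : psi Q M ω 0 = 1 := by
  simp [psi, chi_zero]

lemma psi_sub_mul (ω ω' p : ZMod Q × ZMod M) :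
    psi Q M (ω' - ω) p = psi Q M ω' p * (psi Q M ω p)⁻¹ := by
  rw [sub_eq_add_neg, psi_add_left, psi_neg_left]

lemma exp_pos_eq (ω p : ZMod Q × ZMod M) :
    Complex.exp ((2 * Real.pi * Complex.I) *
      (((ω.1.val * p.1.val : ℕ) : ℂ) / (Q : ℂ) + ((ω.2.val * p.2.val : ℕ) : ℂ) / (M : ℂ)))
    = psi Q M ω p := by
  rw [mul_add, Complex.exp_add, psi, chi_mul_val, chi_mul_val]
  congr 1 <;> · congr 1; ring

lemma exp_neg_eq (ω p : ZMod Q × ZMod M) :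
    Complex.exp (-(2 * Real.pi * Complex.I) *
      (((ω.1.val * p.1.val : ℕ) : ℂ) / (Q : ℂ) + ((ω.2.val * p.2.val : ℕ) : ℂ) / (M : ℂ)))
    = (psi Q M ω p)⁻¹ := by
  rw [neg_mul, Complex.exp_neg, exp_pos_eq]

lemma dft_eq (g : ZMod Q × ZMod M → ℂ) (ω : ZMod Q × ZMod M) :
    dft Q M g ω = ∑ p : ZMod Q × ZMod M, g p * (psi Q M ω p)⁻¹ := by
  simp only [dft, exp_neg_eq]

lemma idft_eq (h : ZMod Q × ZMod M → ℂ) (p : ZMod Q × ZMod M) :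
    idft Q M h p = (∑ ω : ZMod Q × ZMod M, h ω * psi Q M ω p) / ((Q * M : ℕ) : ℂ) := by
  simp only [idft, exp_pos_eq]

lemma psi_sum (ω : ZMod Q × ZMod M) :
    ∑ p : ZMod Q × ZMod M, psi Q M ω p = if ω = 0 then ((Q * M : ℕ) : ℂ) else 0 := by
  rw [show (∑ p : ZMod Q × ZMod M, psi Q M ω p)
      = (∑ x : ZMod Q, chi Q (ω.1 * x)) * (∑ y : ZMod M, chi M (ω.2 * y)) by
    rw [Finset.sum_mul_sum]
    rw [Fintype.sum_prod_type]
    rfl]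
  rw [chi_sum, chi_sum]
  by_cases h1 : ω.1 = 0 <;> by_cases h2 : ω.2 = 0
  · rw [if_pos h1, if_pos h2, if_pos (by ext <;> simp [h1, h2])]
    push_cast; ring
  · rw [if_pos h1, if_neg h2, if_neg (by intro hh; exact h2 (by rw [hh]; rfl))]; ring
  · rw [if_neg h1, if_pos h2, if_neg (by intro hh; exact h1 (by rw [hh]; rfl))]; ring
  · rw [if_neg h1, if_neg h2, if_neg (by intro hh; exact h1 (by rw [hh]; rfl))]; ring

lemma QM_ne_zero : ((Q * M : ℕ) : ℂ) ≠ 0 := by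
  have : Q * M ≠ 0 := Nat.mul_ne_zero (NeZero.ne Q) (NeZero.ne M)
  exact_mod_cast Nat.cast_ne_zero.2 this

lemma dft_idft (h : ZMod Q × ZMod M → ℂ) (ω : ZMod Q × ZMod M) :
    dft Q M (idft Q M h) ω = h ω := by
  have hQM := QM_ne_zero (Q := Q) (M := M)
  rw [dft_eq]
  simp only [idft_eq]
  rw [show (∑ p : ZMod Q × ZMod M,
      (∑ ω' : ZMod Q × ZMod M, h ω' * psi Q M ω' p) / ((Q * M : ℕ) : ℂ) * (psi Q M ω p)⁻¹)
    = (∑ p : ZMod Q × ZMod M, ∑ ω' : ZMod Q × ZMod M,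
        h ω' * (psi Q M (ω' - ω) p)) / ((Q * M : ℕ) : ℂ) by
    rw [Finset.sum_div]
    refine Finset.sum_congr rfl fun p _ => ?_
    rw [div_mul_eq_mul_div, Finset.sum_mul]
    congr 1
    refine Finset.sum_congr rfl fun ω' _ => ?_
    rw [psi_sub_mul, mul_assoc]]
  rw [Finset.sum_comm]
  have : ∀ ω' : ZMod Q × ZMod M, (∑ p : ZMod Q × ZMod M, h ω' * psi Q M (ω' - ω) p)
      = h ω' * (if ω' - ω = 0 then ((Q*M:ℕ):ℂ) else 0) := by
    intro ω'; rw [← Finset.mul_sum, psi_sum]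
  simp only [this, sub_eq_zero, mul_ite, mul_zero]
  rw [Finset.sum_ite_eq' Finset.univ ω (fun ω' => h ω' * ((Q*M:ℕ):ℂ))]
  simp only [Finset.mem_univ, if_true]
  rw [mul_div_assoc, div_self hQM, mul_one]

lemma corr (f g : ZMod Q × ZMod M → ℂ) (p₀ : ZMod Q × ZMod M) :
    ∑ b : ZMod Q × ZMod M, f (p₀ + b) * g b =
      (∑ ω : ZMod Q × ZMod M, dft Q M f ω * dft Q M g (-ω) * psi Q M ω p₀) /
        ((Q * M : ℕ) : ℂ) := by
  have hQM := QM_ne_zero (Q := Q) (M := M)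
  rw [eq_div_iff hQM]
  have expand : ∀ ω : ZMod Q × ZMod M,
      dft Q M f ω * dft Q M g (-ω) * psi Q M ω p₀ =
        ∑ a : ZMod Q × ZMod M, ∑ b : ZMod Q × ZMod M,
          f a * g b * (psi Q M ω (b + p₀) * (psi Q M ω a)⁻¹) := by
    intro ω
    rw [dft_eq, dft_eq, Finset.sum_mul_sum, Finset.sum_mul]
    refine Finset.sum_congr rfl fun a _ => ?_
    rw [Finset.sum_mul]
    refine Finset.sum_congr rfl fun b _ => ?_
    rw [psi_neg_left, inv_inv]
    rw [show psi Q M ω (b + p₀) = psi Q M ω b * psi Q M ω p₀ by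
      rw [psi_comm, psi_add_left, psi_comm b ω, psi_comm p₀ ω]]
    ring
  rw [Finset.sum_congr rfl fun ω _ => expand ω]
  rw [Finset.sum_comm]
  rw [Finset.sum_congr rfl fun a (_ : a ∈ Finset.univ) => Finset.sum_comm (γ := ZMod Q × ZMod M)]
  have inner : ∀ a b : ZMod Q × ZMod M,
      (∑ ω : ZMod Q × ZMod M, f a * g b * (psi Q M ω (b + p₀) * (psi Q M ω a)⁻¹))
      = if a = b + p₀ then f a * g b * ((Q*M:ℕ):ℂ) else 0 := by
    intro a b
    rw [← Finset.mul_sum]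
    have : ∀ ω : ZMod Q × ZMod M, psi Q M ω (b + p₀) * (psi Q M ω a)⁻¹
        = psi Q M ((b + p₀) - a) ω := by
      intro ω
      rw [psi_sub_mul, psi_comm (b+p₀) ω, psi_comm a ω]
    rw [Finset.sum_congr rfl fun ω _ => this ω, psi_sum]
    by_cases hab : a = b + p₀
    · rw [if_pos (by rw [hab]; ring_nf), if_pos hab]
    · rw [if_neg (fun hh => hab (by linear_combination (norm := abel) -hh)), if_neg hab, mul_zero]
  rw [Finset.sum_congr rfl fun a _ => Finset.sum_congr rfl fun b _ => inner a b]
  rw [Finset.sum_comm]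
  rw [Finset.sum_mul]
  refine Finset.sum_congr rfl fun b _ => ?_
  rw [Finset.sum_ite_eq' Finset.univ (b + p₀) (fun a => f a * g b * ((Q*M:ℕ):ℂ))]
  simp [add_comm b p₀, mul_assoc, mul_comm, mul_left_comm]

end Psi


section Main
variable {Q M : ℕ} [NeZero Q] [NeZero M] {k : ℕ}

lemma dft_real_neg (f : ZMod Q × ZMod M → ℝ) (ω : ZMod Q × ZMod M) :
    dft Q M (fun p => ((f p : ℝ) : ℂ)) (-ω) =
      (starRingEnd ℂ) (dft Q M (fun p => ((f p : ℝ) : ℂ)) ω) := by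
  rw [dft_eq, dft_eq, map_sum]
  refine Finset.sum_congr rfl fun p _ => ?_
  rw [map_mul, Complex.conj_ofReal, map_inv₀, psi_conj, inv_inv, psi_neg_left, inv_inv]

lemma cdft_neg (F : ZMod Q × ZMod M → Fin k → ℝ) (ω : ZMod Q × ZMod M) (n : Fin k) :
    cdft Q M F (-ω) n = (starRingEnd ℂ) (cdft Q M F ω n) :=
  dft_real_neg (fun p => F p n) ω

lemma cinner_neg (F₀ F₁ : ZMod Q × ZMod M → Fin k → ℝ) (ω : ZMod Q × ZMod M) :
    cinner (cdft Q M F₁ (-ω)) (cdft Q M F₀ (-ω)) =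
      (starRingEnd ℂ) (cinner (cdft Q M F₁ ω) (cdft Q M F₀ ω)) := by
  simp only [cinner, map_sum, map_mul, cdft_neg, RingHomCompTriple.comp_apply,
    RingHom.id_apply, Complex.conj_conj]

lemma Ghat_mul (F₀ F₁ : ZMod Q × ZMod M → Fin k → ℝ)
    (h : ∀ ω : ZMod Q × ZMod M, cinner (cdft Q M F₁ ω) (cdft Q M F₀ ω) ≠ 0)
    (ω : ZMod Q × ZMod M) (i j : Fin k) :
    Ghat Q M F₀ F₁ ω i * Ghat Q M F₀ F₁ (-ω) j = cdft Q M F₁ ω i * cdft Q M F₁ (-ω) j := by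
  set s := cinner (cdft Q M F₁ ω) (cdft Q M F₀ ω) with hs
  have hconj : cinner (cdft Q M F₁ (-ω)) (cdft Q M F₀ (-ω)) = (starRingEnd ℂ) s :=
    cinner_neg F₀ F₁ ω
  have habs : ‖(starRingEnd ℂ) s‖ = ‖s‖ := Complex.norm_conj s
  have hs0 : s ≠ 0 := h ω
  have habs0 : ((‖s‖ : ℝ) : ℂ) ≠ 0 := by
    exact_mod_cast Complex.ofReal_ne_zero.2 (norm_ne_zero_iff.2 hs0)
  rw [Ghat, Ghat, hconj, habs, ← hs]
  rw [div_mul_div_comm]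
  rw [show cdft Q M F₁ ω i * s * (cdft Q M F₁ (-ω) j * (starRingEnd ℂ) s)
      = cdft Q M F₁ ω i * cdft Q M F₁ (-ω) j * (s * (starRingEnd ℂ) s) by ring]
  rw [Complex.mul_conj]
  rw [show ((‖s‖ : ℝ) : ℂ) * ((‖s‖ : ℝ) : ℂ)
      = ((Complex.normSq s : ℝ) : ℂ) by
    rw [← Complex.ofReal_mul, ← sq, Complex.sq_norm]]
  have hns : ((Complex.normSq s : ℝ) : ℂ) ≠ 0 := by
    simpa [Complex.normSq_eq_zero] using hs0
  rw [mul_div_assoc, div_self hns, mul_one]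

end Main

/-- The `ρ = 1` boundary case of Proposition 2: the real inverse DFT `G` of the
mixed spectrum `Ĝ` has the same Gram matrix and the same correlation as `F₁`. -/
theorem idft_Ghat_same_second_order_stats (Q M : ℕ) [NeZero Q] [NeZero M] {k : ℕ}
    (F₀ F₁ : ZMod Q × ZMod M → Fin k → ℝ)
    (h : ∀ ω : ZMod Q × ZMod M, cinner (cdft Q M F₁ ω) (cdft Q M F₀ ω) ≠ 0)
    (G : ZMod Q × ZMod M → Fin k → ℝ)
    (hG : ∀ (p : ZMod Q × ZMod M) (n : Fin k),
      ((G p n : ℝ) : ℂ) = idft Q M (fun ω => Ghat Q M F₀ F₁ ω n) p) :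
    (∀ i j : Fin k,
      (∑ p : ZMod Q × ZMod M, G p i * G p j) / ((Q * M : ℕ) : ℝ) =
        (∑ p : ZMod Q × ZMod M, F₁ p i * F₁ p j) / ((Q * M : ℕ) : ℝ)) ∧
    (∀ (p : ZMod Q × ZMod M) (n : Fin k),
      (∑ p' : ZMod Q × ZMod M, G p' n * G (p + p') n) / ((Q * M : ℕ) : ℝ) =
        (∑ p' : ZMod Q × ZMod M, F₁ p' n * F₁ (p + p') n) / ((Q * M : ℕ) : ℝ)) := by
  have hdftG : ∀ (n : Fin k) (ω : ZMod Q × ZMod M),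
      dft Q M (fun p => ((G p n : ℝ) : ℂ)) ω = Ghat Q M F₀ F₁ ω n := by
    intro n ω
    have hfe : (fun p => ((G p n : ℝ) : ℂ)) = idft Q M (fun ω => Ghat Q M F₀ F₁ ω n) :=
      funext fun p => hG p n
    rw [hfe, dft_idft]
  have key : ∀ (i j : Fin k) (p₀ : ZMod Q × ZMod M),
      ∑ b : ZMod Q × ZMod M, ((G (p₀ + b) i : ℝ) : ℂ) * ((G b j : ℝ) : ℂ) =
      ∑ b : ZMod Q × ZMod M, ((F₁ (p₀ + b) i : ℝ) : ℂ) * ((F₁ b j : ℝ) : ℂ) := by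
    intro i j p₀
    rw [corr (fun p => ((G p i : ℝ) : ℂ)) (fun p => ((G p j : ℝ) : ℂ)) p₀,
        corr (fun p => ((F₁ p i : ℝ) : ℂ)) (fun p => ((F₁ p j : ℝ) : ℂ)) p₀]
    congr 1
    refine Finset.sum_congr rfl fun ω _ => ?_
    congr 1
    rw [hdftG, hdftG]
    exact Ghat_mul F₀ F₁ h ω i j
  constructor
  · intro i j
    have h0 := key i j 0
    simp only [zero_add] at h0
    have hr : (∑ p : ZMod Q × ZMod M, G p i * G p j) = ∑ p : ZMod Q × ZMod M, F₁ p i * F₁ p j := by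
      exact_mod_cast h0
    rw [hr]
  · intro p n
    have h0 := key n n p
    have hc : ((∑ p' : ZMod Q × ZMod M, G p' n * G (p + p') n : ℝ) : ℂ)
        = ((∑ p' : ZMod Q × ZMod M, F₁ p' n * F₁ (p + p') n : ℝ) : ℂ) := by
      push_cast
      rw [Finset.sum_congr rfl (fun p' (_ : p' ∈ Finset.univ) =>
            mul_comm ((G p' n : ℝ) : ℂ) ((G (p + p') n : ℝ) : ℂ)),
          Finset.sum_congr rfl (fun p' (_ : p' ∈ Finset.univ) =>
            mul_comm ((F₁ p' n : ℝ) : ℂ) ((F₁ (p + p') n : ℝ) : ℂ))]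
      exact h0
    have hr : (∑ p' : ZMod Q × ZMod M, G p' n * G (p + p') n)
        = ∑ p' : ZMod Q × ZMod M, F₁ p' n * F₁ (p + p') n := by
      exact_mod_cast hc
    rw [hr]
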